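/- Let S and A be nonempty finite sets, let p be a transition kernel, let λ ∈ (0,1), let c : S×A → ℝ, and let v* be the unique fixed point of the Bellman operator T. For each decision rule d : S → A let v_d = (I − λP_d)^{-1} h_d, where P_d(s,s') = p(s'|s,d(s)) and h_d(s) = c(s,d(s)). Then there exists a decision rule d* such that v_{d*}(s) ≤ v_d(s) for every decision rule d and every s ∈ S, and moreover v*(s) = min_{d : S → A} v_d(s) = v_{d*}(s) for every s ∈ S. -/

import Mathlib

open Filter

section Aux

variable {S : Type*} [Fintype S] [Nonempty S] [DecidableEq S]

/-- The affine map `w ↦ h + lam * P w`. -/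
private def Lmap (P : S → S → ℝ) (h : S → ℝ) (lam : ℝ) (v : S → ℝ) : S → ℝ :=
  fun s => h s + lam * ∑ s', P s s' * v s'

private lemma Lmap_contracting (P : S → S → ℝ) (hP0 : ∀ s s', 0 ≤ P s s')
    (hP1 : ∀ s, ∑ s', P s s' = 1) (h : S → ℝ) (lam : ℝ) (hlam0 : 0 ≤ lam) (hlam1 : lam < 1) :
    ContractingWith ⟨lam, hlam0⟩ (Lmap P h lam) := by
  constructor
  · exact_mod_cast hlam1
  · apply LipschitzWith.of_dist_le_mul
    intro v w
    rw [dist_pi_le_iff (by positivity)]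
    intro s
    have key : Lmap P h lam v s - Lmap P h lam w s
        = lam * ∑ s', P s s' * (v s' - w s') := by
      simp only [Lmap]
      have e : ∀ s' : S, lam * (P s s' * (v s' - w s'))
          = lam * (P s s' * v s') - lam * (P s s' * w s') := fun s' => by ring
      simp only [Finset.mul_sum]
      rw [Finset.sum_congr rfl fun s' _ => e s', Finset.sum_sub_distrib]
      ring
    rw [Real.dist_eq, key, abs_mul, abs_of_nonneg hlam0]
    apply mul_le_mul_of_nonneg_left _ hlam0
    calc |∑ s', P s s' * (v s' - w s')| ≤ ∑ s', |P s s' * (v s' - w s')| :=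
          Finset.abs_sum_le_sum_abs _ _
      _ ≤ ∑ s', P s s' * dist v w := by
          apply Finset.sum_le_sum
          intro s' _
          rw [abs_mul, abs_of_nonneg (hP0 s s')]
          exact mul_le_mul_of_nonneg_left
            (by rw [← Real.dist_eq]; exact dist_le_pi_dist v w s') (hP0 s s')
      _ = dist v w := by rw [← Finset.sum_mul, hP1, one_mul]

private lemma Lmap_mono (P : S → S → ℝ) (hP0 : ∀ s s', 0 ≤ P s s')
    (h : S → ℝ) (lam : ℝ) (hlam0 : 0 ≤ lam) {v w : S → ℝ} (hvw : ∀ s, v s ≤ w s) :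
    ∀ s, Lmap P h lam v s ≤ Lmap P h lam w s := by
  intro s
  simp only [Lmap]
  gcongr with s' _
  exacts [hP0 s s', hvw s']

end Aux

/-- There exists a decision rule `d*` whose policy value
`v_{d*} = (I - λ P_{d*})⁻¹ h_{d*}` attains the componentwise minimum of policy values
simultaneously at all states, and this componentwise minimum is the unique fixed point
`v*` of the Bellman operator. -/
theorem stmt_10 {S A : Type*} [Fintype S] [Nonempty S] [DecidableEq S]
    [Fintype A] [Nonempty A]
    (p : S → A → S → ℝ)
    (hp0 : ∀ s a s', 0 ≤ p s a s')
    (hp1 : ∀ s a, ∑ s', p s a s' = 1)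
    (lam : ℝ) (hlam0 : 0 < lam) (hlam1 : lam < 1)
    (c : S → A → ℝ)
    (vstar : S → ℝ)
    (hfix : ∀ s, vstar s = ⨅ a : A, c s a + lam * ∑ s', p s a s' * vstar s')
    (vd : (S → A) → S → ℝ)
    (hvd : ∀ d : S → A,
      vd d = (((1 : Matrix S S ℝ) - lam • Matrix.of fun s₁ s₂ => p s₁ (d s₁) s₂)⁻¹).mulVec
        (fun s₁ => c s₁ (d s₁))) :
    ∃ dstar : S → A,
      (∀ (d : S → A) (s : S), vd dstar s ≤ vd d s) ∧
      (∀ s : S, vstar s = (⨅ d : S → A, vd d s) ∧ vstar s = vd dstar s) := by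
  classical
  -- Setup per decision rule
  set Pd : (S → A) → S → S → ℝ := fun d s s' => p s (d s) s' with hPd
  set hd : (S → A) → S → ℝ := fun d s => c s (d s) with hhd
  have hP0 : ∀ d s s', 0 ≤ Pd d s s' := fun d s s' => hp0 s (d s) s'
  have hP1 : ∀ d s, ∑ s', Pd d s s' = 1 := fun d s => hp1 s (d s)
  have hcontr : ∀ d : S → A,
      ContractingWith ⟨lam, hlam0.le⟩ (Lmap (Pd d) (hd d) lam) := fun d =>
    Lmap_contracting (Pd d) (hP0 d) (hP1 d) (hd d) lam hlam0.le hlam1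
  -- fixed point of L_d
  set u : (S → A) → S → ℝ := fun d => (hcontr d).fixedPoint _ with hu
  have hufix : ∀ d, Lmap (Pd d) (hd d) lam (u d) = u d := fun d =>
    (hcontr d).fixedPoint_isFixedPt
  -- The matrix M_d is invertible and vd d = u d
  have hvdu : ∀ d, vd d = u d := by
    intro d
    set M : Matrix S S ℝ :=
      (1 : Matrix S S ℝ) - lam • Matrix.of fun s₁ s₂ => p s₁ (d s₁) s₂ with hM
    have hMmul : ∀ v : S → ℝ, M.mulVec v = fun s => v s - lam * ∑ s', Pd d s s' * v s' := by
      intro v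
      funext s
      simp only [hM, Matrix.mulVec, dotProduct, Matrix.sub_apply, Matrix.smul_apply,
        Matrix.one_apply, Matrix.of_apply, smul_eq_mul, sub_mul, ite_mul, one_mul, zero_mul,
        Finset.sum_sub_distrib, Finset.sum_ite_eq, Finset.mem_univ, if_true]
      congr 1
      rw [Finset.mul_sum]
      apply Finset.sum_congr rfl
      intro s' _
      ring
    -- injectivity of mulVec
    have hinj : Function.Injective M.mulVec := by
      intro x y hxy
      have hx : Lmap (Pd d) (M.mulVec x) lam x = x := by
        funext s
        simp only [Lmap, hMmul]
        ring
      have hy : Lmap (Pd d) (M.mulVec x) lam y = y := by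
        funext s
        simp only [Lmap, hxy, hMmul]
        ring
      exact (Lmap_contracting (Pd d) (hP0 d) (hP1 d) (M.mulVec x) lam hlam0.le
        hlam1).fixedPoint_unique' hx hy
    have hMunit : IsUnit M := Matrix.mulVec_injective_iff_isUnit.mp hinj
    have hMdet : IsUnit M.det := (Matrix.isUnit_iff_isUnit_det M).mp hMunit
    have hMu : M.mulVec (u d) = hd d := by
      funext s
      rw [hMmul]
      have := congrFun (hufix d) s
      simp only [Lmap] at this
      simp only [← this]
      ring
    rw [hvd d]
    have : (fun s₁ => c s₁ (d s₁)) = hd d := rfl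
    rw [this, ← hMu, Matrix.mulVec_mulVec, Matrix.nonsing_inv_mul M hMdet,
      Matrix.one_mulVec]
  -- choose dstar attaining the min in the Bellman equation
  have hargmin : ∀ s : S, ∃ a : A, ∀ b : A,
      c s a + lam * ∑ s', p s a s' * vstar s' ≤ c s b + lam * ∑ s', p s b s' * vstar s' :=
    fun s => Finite.exists_min _
  set dstar : S → A := fun s => (hargmin s).choose with hdstar
  have hvstarfix : Lmap (Pd dstar) (hd dstar) lam vstar = vstar := by
    funext s
    have h1 : vstar s = c s (dstar s) + lam * ∑ s', p s (dstar s) s' * vstar s' := by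
      rw [hfix s]
      apply le_antisymm
      · exact ciInf_le (Finite.bddBelow_range _) (dstar s)
      · exact le_ciInf (hargmin s).choose_spec
    simp only [Lmap]
    exact h1.symm
  have hvstar_eq : vstar = u dstar :=
    (hcontr dstar).fixedPoint_unique hvstarfix
  -- vstar ≤ vd d for every d
  have hle : ∀ (d : S → A) (s : S), vstar s ≤ vd d s := by
    intro d
    have hstep : ∀ s, vstar s ≤ Lmap (Pd d) (hd d) lam vstar s := by
      intro s
      simp only [Lmap]
      rw [hfix s]
      exact ciInf_le (Finite.bddBelow_range _) (d s)
    have hiter : ∀ n : ℕ, ∀ s, vstar s ≤ (Lmap (Pd d) (hd d) lam)^[n] vstar s := by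
      intro n
      induction n with
      | zero => simp
      | succ n ih =>
        intro s
        rw [Function.iterate_succ_apply']
        exact le_trans (hstep s) (Lmap_mono (Pd d) (hP0 d) (hd d) lam hlam0.le ih s)
    intro s
    rw [hvdu d]
    have htend : Tendsto (fun n => (Lmap (Pd d) (hd d) lam)^[n] vstar s) atTop (nhds (u d s)) := by
      have := (hcontr d).tendsto_iterate_fixedPoint vstar
      exact (tendsto_pi_nhds.mp this) s
    exact ge_of_tendsto htend (Eventually.of_forall fun n => hiter n s)
  refine ⟨dstar, ?_, ?_⟩
  · intro d s
    calc vd dstar s = vstar s := by rw [hvdu dstar, ← hvstar_eq]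
      _ ≤ vd d s := hle d s
  · intro s
    have h2 : vstar s = vd dstar s := by rw [hvdu dstar, ← hvstar_eq]
    refine ⟨?_, h2⟩
    apply le_antisymm
    · exact le_ciInf fun d => hle d s
    · rw [h2]
      exact ciInf_le (Finite.bddBelow_range _) dstar
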